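/- Let k ≥ 1 be an integer and let a be a real number with a > (k−1)/k. Then Q_k(a) > 0, where Q_k(a) denotes the determinant of the k×k tridiagonal matrix with first diagonal entry a, all other diagonal entries 2, all sub- and super-diagonal entries −1, and all other entries 0. -/

import Mathlib

/-- `Qdet k a` is the determinant of the `k × k` tridiagonal matrix whose first
diagonal entry is `a`, all other diagonal entries are `2`, all sub- and
super-diagonal entries are `-1`, and all remaining entries are `0`. -/
def Qdet (k : ℕ) (a : ℝ) : ℝ :=
  (Matrix.of fun i j : Fin k =>
    if i = j then (if i.val = 0 then a else 2)
    else if i.val + 1 = j.val ∨ j.val + 1 = i.val then -1 else 0).det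

lemma Qdet_rec (k : ℕ) (a : ℝ) :
    Qdet (k+2) a = a * Qdet (k+1) 2 - Qdet k 2 := by
  set M : Matrix (Fin (k+2)) (Fin (k+2)) ℝ := Matrix.of fun i j : Fin (k+2) =>
    if i = j then (if i.val = 0 then a else 2)
    else if i.val + 1 = j.val ∨ j.val + 1 = i.val then -1 else 0 with hM
  have h1 : M.submatrix Fin.succ Fin.succ =
      Matrix.of (fun i j : Fin (k+1) =>
        if i = j then (if i.val = 0 then (2:ℝ) else 2)
        else if i.val + 1 = j.val ∨ j.val + 1 = i.val then -1 else 0) := by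
    ext i j
    simp only [hM, Matrix.submatrix_apply, Matrix.of_apply, Fin.succ_inj, Fin.val_succ]
    rcases eq_or_ne i j with h | h
    · simp [h]
    · rw [if_neg h, if_neg h]
      exact if_congr (by omega) rfl rfl
  have h2 : M.submatrix (Fin.succ ∘ Fin.succ)
      ((1 : Fin (k+2)).succAbove ∘ Fin.succ) =
      Matrix.of (fun i j : Fin k =>
        if i = j then (if i.val = 0 then (2:ℝ) else 2)
        else if i.val + 1 = j.val ∨ j.val + 1 = i.val then -1 else 0) := by
    ext i j
    have hsa : (1 : Fin (k+2)).succAbove j.succ = j.succ.succ := by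
      simpa using Fin.succ_succAbove_succ (0 : Fin (k+1)) j
    simp only [hM, Matrix.submatrix_apply, Function.comp_apply, hsa, Matrix.of_apply,
      Fin.succ_inj, Fin.val_succ]
    rcases eq_or_ne i j with h | h
    · simp [h]
    · rw [if_neg h, if_neg h]
      exact if_congr (by omega) rfl rfl
  unfold Qdet
  rw [← hM, Matrix.det_succ_row_zero, Fin.sum_univ_succ, Fin.sum_univ_succ]
  have htail : ∀ x : Fin k, (-1 : ℝ) ^ ((x.succ.succ : Fin (k+2)).val) *
      M 0 x.succ.succ * (M.submatrix Fin.succ x.succ.succ.succAbove).det = 0 := by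
    intro x
    have : M 0 x.succ.succ = 0 := by
      simp only [hM, Matrix.of_apply]
      rw [if_neg (fun h => Fin.succ_ne_zero _ h.symm),
        if_neg (by simp only [Fin.val_succ, Fin.val_zero]; omega)]
    rw [this]; ring
  rw [Finset.sum_congr rfl (fun x _ => htail x), Finset.sum_const_zero]
  have hN : (M.submatrix Fin.succ (Fin.succAbove 1)).det =
      -(Matrix.of (fun i j : Fin k =>
        if i = j then (if i.val = 0 then (2:ℝ) else 2)
        else if i.val + 1 = j.val ∨ j.val + 1 = i.val then -1 else 0)).det := by
    rw [Matrix.det_succ_column_zero, Fin.sum_univ_succ]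
    have hcol : ∀ x : Fin k, (-1:ℝ) ^ ((x.succ : Fin (k+1)).val) *
        (M.submatrix Fin.succ (Fin.succAbove 1)) x.succ 0 *
        ((M.submatrix Fin.succ (Fin.succAbove 1)).submatrix x.succ.succAbove Fin.succ).det = 0 := by
      intro x
      have : (M.submatrix Fin.succ (Fin.succAbove 1)) x.succ 0 = 0 := by
        have h0 : (1 : Fin (k+2)).succAbove 0 = 0 := Fin.succ_succAbove_zero 0
        simp only [Matrix.submatrix_apply, h0, hM, Matrix.of_apply]
        rw [if_neg (Fin.succ_ne_zero _),
          if_neg (by simp only [Fin.val_succ, Fin.val_zero]; omega)]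
      rw [this]; ring
    rw [Finset.sum_congr rfl (fun x _ => hcol x), Finset.sum_const_zero, add_zero]
    have h0 : (1 : Fin (k+2)).succAbove 0 = 0 := Fin.succ_succAbove_zero 0
    have hM10 : (M.submatrix Fin.succ (Fin.succAbove 1)) 0 0 = -1 := by
      simp only [Matrix.submatrix_apply, h0, hM, Matrix.of_apply]
      rw [if_neg (Fin.succ_ne_zero _), if_pos (by simp)]
    rw [hM10]
    rw [show ((M.submatrix Fin.succ (Fin.succAbove 1)).submatrix
        (Fin.succAbove 0) Fin.succ) = M.submatrix (Fin.succ ∘ Fin.succ)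
        ((1 : Fin (k+2)).succAbove ∘ Fin.succ) by
      rw [Matrix.submatrix_submatrix, Fin.succAbove_zero]]
    rw [h2]
    simp
  have hM00 : M 0 0 = a := by simp [hM]
  have hM01 : M 0 1 = -1 := by
    simp only [hM, Matrix.of_apply]
    rw [if_neg (by simp [Fin.ext_iff]), if_pos (Or.inl (by simp))]
  simp only [Fin.succAbove_zero, Fin.succ_zero_eq_one, Fin.val_zero, Fin.val_one]
  rw [hN, h1, hM00, hM01]
  ring

lemma Qdet_one (a : ℝ) : Qdet 1 a = a := by
  unfold Qdet
  rw [Matrix.det_fin_one]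
  simp

lemma Qdet_two (a : ℝ) : Qdet 2 a = 2 * a - 1 := by
  unfold Qdet
  rw [Matrix.det_fin_two]
  norm_num
  ring

lemma Qdet_two_val : ∀ k : ℕ, Qdet (k+1) 2 = (k : ℝ) + 2 := by
  have key : ∀ k : ℕ, Qdet (k+1) 2 = (k:ℝ) + 2 ∧ Qdet (k+2) 2 = (k:ℝ) + 3 := by
    intro k
    induction k with
    | zero =>
      exact ⟨by rw [Qdet_one]; norm_num, by rw [Qdet_two]; norm_num⟩
    | succ n ih =>
      refine ⟨by rw [show n+1+1 = n+2 from rfl]; rw [ih.2]; push_cast; ring, ?_⟩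
      rw [show n+1+2 = n+1+2 from rfl, Qdet_rec (n+1) 2, ih.2, ih.1]
      push_cast; ring
  exact fun k => (key k).1

lemma Qdet_val (k : ℕ) (hk : 1 ≤ k) (a : ℝ) : Qdet k a = k * a - (k - 1) := by
  match k, hk with
  | 1, _ => rw [Qdet_one]; norm_num
  | (n+2), _ =>
    rw [Qdet_rec n a]
    rcases n with _ | m
    · rw [show (0:ℕ)+1 = 1 from rfl, Qdet_two_val 0]
      unfold Qdet
      rw [Matrix.det_fin_zero]
      push_cast; ring
    · rw [Qdet_two_val (m+1), Qdet_two_val m]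
      push_cast; ring

theorem stmt7 (k : ℕ) (hk : 1 ≤ k) (a : ℝ) (ha : a > ((k : ℝ) - 1) / (k : ℝ)) :
    Qdet k a > 0 := by
  rw [Qdet_val k hk a]
  have hkpos : (0:ℝ) < k := by exact_mod_cast hk
  rw [gt_iff_lt, div_lt_iff₀ hkpos] at ha
  nlinarith
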